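/- Let a > 0, γ ∈ [0,1), b ∈ (0,1), and x̄ > 0. Let T = (x̄^{1−γ} − (b x̄)^{1−γ})/(a(1−γ)) be the time needed for the solution of dx/dt = a x^{γ} started at b x̄ to reach x̄, and let x(t) = ((b x̄)^{1−γ} + a(1−γ)t)^{1/(1−γ)} for t ∈ [0,T]. Then the time average of the rate over one cycle satisfies (1/T)·∫₀^T x(t) dt = x̄ · (1−b^{2−γ})(1−γ) / ((2−γ)(1−b^{1−γ})). -/

import Mathlib

/-- Under the threshold policy with threshold `x̄`, the G-AIMD rate grows from
`b x̄` following `dx/dt = a xᵞ` until it reaches `x̄` at time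
`T = (x̄^(1-γ) - (b x̄)^(1-γ))/(a(1-γ))`.  The time average of the rate over one
cycle equals `x̄ (1-b^(2-γ))(1-γ) / ((2-γ)(1-b^(1-γ)))`. -/
theorem gaimd_cycle_average_throughput
    (a γ b xbar : ℝ) (ha : 0 < a) (hγ : γ ∈ Set.Ico (0 : ℝ) 1)
    (hb : b ∈ Set.Ioo (0 : ℝ) 1) (hxbar : 0 < xbar)
    (T : ℝ) (hT : T = (xbar ^ (1 - γ) - (b * xbar) ^ (1 - γ)) / (a * (1 - γ)))
    (x : ℝ → ℝ)
    (hx : ∀ t : ℝ, x t = ((b * xbar) ^ (1 - γ) + a * (1 - γ) * t) ^ (1 / (1 - γ))) :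
    (1 / T) * ∫ t in (0 : ℝ)..T, x t
      = xbar * ((1 - b ^ (2 - γ)) * (1 - γ)) / ((2 - γ) * (1 - b ^ (1 - γ))) := by
  obtain ⟨hγ0, hγ1⟩ := hγ
  obtain ⟨hb0, hb1⟩ := hb
  have hg : 0 < 1 - γ := by linarith
  have hk : a * (1 - γ) ≠ 0 := by positivity
  have hbx : 0 < b * xbar := by positivity
  have hmul : (b * xbar) ^ (1 - γ) = b ^ (1 - γ) * xbar ^ (1 - γ) :=
    Real.mul_rpow hb0.le hxbar.le
  have hxb : 0 < xbar ^ (1 - γ) := Real.rpow_pos_of_pos hxbar _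
  have hb1γ : b ^ (1 - γ) < 1 := Real.rpow_lt_one hb0.le hb1 hg
  have hTpos : 0 < T := by
    rw [hT]
    apply div_pos _ (by positivity)
    rw [hmul]; nlinarith
  have hend : a * (1 - γ) * T + (b * xbar) ^ (1 - γ) = xbar ^ (1 - γ) := by
    rw [hT]; field_simp; ring
  have h1 : (∫ t in (0 : ℝ)..T, x t)
      = (a * (1-γ))⁻¹ • ∫ u in (a * (1-γ) * 0 + (b*xbar)^(1-γ))..(a * (1-γ) * T + (b*xbar)^(1-γ)),
          u ^ (1 / (1 - γ)) := by
    rw [← intervalIntegral.integral_comp_mul_add (fun u => u ^ (1 / (1 - γ))) hk]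
    apply intervalIntegral.integral_congr
    intro t ht
    rw [hx t, add_comm]
  rw [h1, mul_zero, zero_add, hend,
    integral_rpow (Or.inl (by have := one_div_pos.mpr hg; linarith))]
  have hq : 1 / (1 - γ) + 1 = (2 - γ) / (1 - γ) := by field_simp; ring
  have hexp : (1 - γ) * ((2 - γ) / (1 - γ)) = 2 - γ := by field_simp
  have e1 : (xbar ^ (1 - γ)) ^ (1 / (1 - γ) + 1) = xbar ^ (2 - γ) := by
    rw [hq, ← Real.rpow_mul hxbar.le, hexp]
  have e2 : ((b * xbar) ^ (1 - γ)) ^ (1 / (1 - γ) + 1) = b ^ (2 - γ) * xbar ^ (2 - γ) := by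
    rw [hq, ← Real.rpow_mul hbx.le, hexp, Real.mul_rpow hb0.le hxbar.le]
  rw [e1, e2, hq]
  rw [hT, hmul]
  have h2γ : (2 : ℝ) - γ ≠ 0 := by linarith
  have hbb : 1 - b ^ (1 - γ) ≠ 0 := by nlinarith
  have hx2 : xbar ^ (2 - γ) = xbar ^ (1 - γ) * xbar := by
    have h21 : (2:ℝ) - γ = (1 - γ) + 1 := by ring
    rw [h21, Real.rpow_add hxbar, Real.rpow_one]
  have hnum : xbar ^ (1 - γ) - b ^ (1 - γ) * xbar ^ (1 - γ) ≠ 0 := by nlinarith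
  rw [hx2, smul_eq_mul]
  field_simp
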